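/- arXiv:math/0312393 — 4 statements merged into one kernel-verified Lean document; each statement's English description precedes it below -/
import Mathlib

section
/- Let K be a number field, let T ⊆ M_K be any set of places of K, and let x, y ∈ ℙⁿ(K) be two distinct points. Then h(x) + h(y) ≥ ∑_{v ∈ T} n_v · δ_v(x, y) − log 2. -/
open NumberField IsDedekindDomain
open scoped Classical Multiplicative
set_option synthInstance.maxHeartbeats 400000
set_option maxHeartbeats 1000000
set_option linter.unusedSectionVars false

/-- The set of places of a number field `K`: infinite (archimedean) places together with
finite places (nonzero prime ideals of the ring of integers). -/
abbrev NumberField.Place (K : Type*) [Field K] [NumberField K] : Type _ :=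
  InfinitePlace K ⊕ HeightOneSpectrum (𝓞 K)

variable (K : Type*) [Field K] [NumberField K]

/-- The residue characteristic of a finite place. -/
noncomputable def NumberField.resChar (v : HeightOneSpectrum (𝓞 K)) : ℕ :=
  ringChar (𝓞 K ⧸ v.asIdeal)

/-- The ramification index of a finite place over its residue characteristic. -/
noncomputable def NumberField.eIdx (v : HeightOneSpectrum (𝓞 K)) : ℕ :=
  Ideal.ramificationIdx'
    (Ideal.span {(NumberField.resChar K v : ℤ)}) v.asIdeal

/-- The residue degree of a finite place over its residue characteristic,
computed as the exponent of `p` in the absolute norm of the prime. -/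
noncomputable def NumberField.fIdx (v : HeightOneSpectrum (𝓞 K)) : ℕ :=
  (Ideal.absNorm v.asIdeal).factorization (NumberField.resChar K v)

/-- The order of vanishing of `x ∈ K` at a finite place. -/
noncomputable def NumberField.ordAt (v : HeightOneSpectrum (𝓞 K)) (x : K) : ℤ :=
  if hx : x = 0 then 0
  else -Multiplicative.toAdd (WithZero.unzero (((v.valuation K).ne_zero_iff).mpr hx))


namespace NumberField

variable {K} (v : HeightOneSpectrum (𝓞 K))

lemma charP_resChar : CharP (𝓞 K ⧸ v.asIdeal) (resChar K v) := ringChar.charP _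

lemma resChar_prime : (resChar K v).Prime := by
  letI := @Fintype.ofFinite (𝓞 K ⧸ v.asIdeal) (Ideal.finiteQuotientOfFreeOfNeBot v.asIdeal v.ne_bot)
  letI := Ideal.Quotient.field v.asIdeal
  haveI := charP_resChar v
  exact CharP.char_is_prime (𝓞 K ⧸ v.asIdeal) (resChar K v)

lemma resChar_pow_fIdx : (resChar K v) ^ (fIdx K v) = Ideal.absNorm v.asIdeal := by
  letI := @Fintype.ofFinite (𝓞 K ⧸ v.asIdeal) (Ideal.finiteQuotientOfFreeOfNeBot v.asIdeal v.ne_bot)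
  letI := Ideal.Quotient.field v.asIdeal
  haveI := charP_resChar v
  obtain ⟨n, hp, hcard⟩ := FiniteField.card (𝓞 K ⧸ v.asIdeal) (resChar K v)
  have habs : Ideal.absNorm v.asIdeal = (resChar K v) ^ (n : ℕ) := by
    rw [Ideal.absNorm_apply, Submodule.cardQuot_apply, Nat.card_eq_fintype_card, hcard]
  rw [habs]
  congr 1
  rw [fIdx, habs, Nat.Prime.factorization_pow hp, Finsupp.single_eq_same]

lemma resChar_mem : (resChar K v : 𝓞 K) ∈ v.asIdeal := by
  haveI := charP_resChar v
  rw [← Ideal.Quotient.eq_zero_iff_mem, map_natCast]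
  exact CharP.cast_eq_zero (𝓞 K ⧸ v.asIdeal) (resChar K v)

lemma eIdx_ne_zero : eIdx K v ≠ 0 := by
  apply Ideal.IsDedekindDomain.ramificationIdx_ne_zero
  · rw [Ideal.map_span]
    simp only [Set.image_singleton, ne_eq, Ideal.span_singleton_eq_bot]
    intro h
    rw [map_natCast] at h
    exact (Nat.cast_ne_zero (R := 𝓞 K)).mpr (resChar_prime v).ne_zero h
  · exact v.isPrime
  · rw [Ideal.map_span]
    simp only [Set.image_singleton, Ideal.span_le, Set.singleton_subset_iff, SetLike.mem_coe]
    exact_mod_cast resChar_mem v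

lemma valuation_eq_ofAdd {x : K} (hx : x ≠ 0) :
    v.valuation K x = ((Multiplicative.ofAdd (-(ordAt K v x)) : Multiplicative ℤ) : WithZero (Multiplicative ℤ)) := by
  simp only [ordAt, dif_neg hx]
  rw [neg_neg, ofAdd_toAdd, WithZero.coe_unzero]

lemma ordAt_eq_of_valuation {x : K} (m : ℤ)
    (h : v.valuation K x = ((Multiplicative.ofAdd (-m) : Multiplicative ℤ) : WithZero (Multiplicative ℤ))) (hx : x ≠ 0) :
    ordAt K v x = m := by
  have := (valuation_eq_ofAdd v hx).symm.trans h
  rw [WithZero.coe_inj] at this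
  simpa using Multiplicative.toAdd.congr_arg this

lemma ordAt_mul {x y : K} (hx : x ≠ 0) (hy : y ≠ 0) :
    ordAt K v (x * y) = ordAt K v x + ordAt K v y := by
  refine ordAt_eq_of_valuation v _ ?_ (mul_ne_zero hx hy)
  rw [Valuation.map_mul, valuation_eq_ofAdd v hx, valuation_eq_ofAdd v hy,
    ← WithZero.coe_mul, ← ofAdd_add, neg_add]

lemma ordAt_one : ordAt K v (1 : K) = 0 := by
  refine ordAt_eq_of_valuation v _ ?_ one_ne_zero
  simp [Valuation.map_one]

lemma ordAt_inv {x : K} (hx : x ≠ 0) : ordAt K v x⁻¹ = -ordAt K v x := by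
  have h := ordAt_mul v (inv_ne_zero hx) hx
  rw [inv_mul_cancel₀ hx, ordAt_one] at h
  linarith

lemma min_le_ordAt_sub {x y : K} (hx : x ≠ 0) (hy : y ≠ 0) (hxy : x - y ≠ 0) :
    min (ordAt K v x) (ordAt K v y) ≤ ordAt K v (x - y) := by
  have h := Valuation.map_sub (v.valuation K) x y
  rw [valuation_eq_ofAdd v hx, valuation_eq_ofAdd v hy, valuation_eq_ofAdd v hxy] at h
  rcases le_max_iff.mp h with h' | h' <;>
    rw [WithZero.coe_le_coe, Multiplicative.ofAdd_le] at h'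
  · exact le_trans (min_le_left _ _) (by linarith)
  · exact le_trans (min_le_right _ _) (by linarith)

lemma ordAt_algebraMap {a : 𝓞 K} (ha : a ≠ 0) :
    ordAt K v (algebraMap (𝓞 K) K a) =
      ((Associates.mk v.asIdeal).count (Associates.mk (Ideal.span {a})).factors : ℤ) := by
  refine ordAt_eq_of_valuation v _ ?_ (by
    simpa using (map_ne_zero_iff _ (IsFractionRing.injective (𝓞 K) K)).mpr ha)
  rw [HeightOneSpectrum.valuation_of_algebraMap, HeightOneSpectrum.intValuation_if_neg _ ha]
  rfl

end NumberField

/-- The absolute value attached to a finite place `v` with residue characteristic `p`,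
normalized so that it extends the standard (`p`-adic) absolute value on `ℚ`:
`|x|_v = p ^ (-(ord_v x) / e(v/p))`. -/
noncomputable def NumberField.finAbs (v : HeightOneSpectrum (𝓞 K)) (x : K) : ℝ :=
  if x = 0 then 0
  else (NumberField.resChar K v : ℝ) ^
    (-(NumberField.ordAt K v x : ℝ) / (NumberField.eIdx K v : ℝ))

/-- The normalized absolute value `|·|_v` attached to a place `v` of `K`; it extends the
standard absolute value on the completion `ℚ_v` of `ℚ`. -/
noncomputable def NumberField.placeAbs : NumberField.Place K → K → ℝ
  | Sum.inl w => fun x => w x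
  | Sum.inr v => fun x => NumberField.finAbs K v x

/-- The local degree `[K_v : ℚ_v]` of a place `v` of `K`. -/
noncomputable def NumberField.localDeg : NumberField.Place K → ℕ
  | Sum.inl w => w.mult
  | Sum.inr v => NumberField.eIdx K v * NumberField.fIdx K v

/-- The normalized local degree `n_v = [K_v : ℚ_v] / [K : ℚ]`. -/
noncomputable def NumberField.nv (v : NumberField.Place K) : ℝ :=
  (NumberField.localDeg K v : ℝ) / (Module.finrank ℚ K : ℝ)

/-- `max_k |x_k|_v` for a tuple of projective coordinates. -/
noncomputable def NumberField.supAbs (v : NumberField.Place K) {n : ℕ}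
    (x : Fin (n + 1) → K) : ℝ :=
  Finset.univ.sup' Finset.univ_nonempty fun i => NumberField.placeAbs K v (x i)

/-- The absolute logarithmic Weil height of a point of `ℙⁿ(K)` given by projective
coordinates `x = [x_0 : ⋯ : x_n]`:  `h(x) = ∑_v n_v log max_k |x_k|_v`. -/
noncomputable def NumberField.heightProj {n : ℕ} (x : Fin (n + 1) → K) : ℝ :=
  ∑ᶠ v : NumberField.Place K, NumberField.nv K v * Real.log (NumberField.supAbs K v x)

/-- The logarithmic `v`-adic distance between two points of `ℙⁿ(K)`:
`δ_v(x,y) = -log ( max_{i,j} |x_i y_j - x_j y_i|_v / (max_k |x_k|_v ⬝ max_k |y_k|_v) )`. -/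
noncomputable def NumberField.deltaAt (v : NumberField.Place K) {n : ℕ}
    (x y : Fin (n + 1) → K) : ℝ :=
  -Real.log
    ((Finset.univ.sup' Finset.univ_nonempty fun p : Fin (n + 1) × Fin (n + 1) =>
        NumberField.placeAbs K v (x p.1 * y p.2 - x p.2 * y p.1)) /
      (NumberField.supAbs K v x * NumberField.supAbs K v y))


namespace NumberField

variable {K : Type*} [Field K] [NumberField K] (v : HeightOneSpectrum (𝓞 K))

lemma one_lt_resChar_real : (1 : ℝ) < (resChar K v : ℝ) := by
  exact_mod_cast (resChar_prime v).one_lt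

lemma resChar_real_pos : (0 : ℝ) < (resChar K v : ℝ) :=
  lt_trans one_pos (one_lt_resChar_real v)

lemma finAbs_pos {x : K} (hx : x ≠ 0) : 0 < finAbs K v x := by
  rw [finAbs, if_neg hx]
  exact Real.rpow_pos_of_pos (resChar_real_pos v) _

lemma finAbs_nonneg (x : K) : 0 ≤ finAbs K v x := by
  rcases eq_or_ne x 0 with h | h
  · simp [finAbs, h]
  · exact (finAbs_pos v h).le

lemma ordAt_neg (x : K) : ordAt K v (-x) = ordAt K v x := by
  rcases eq_or_ne x 0 with h | h
  · simp [h]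
  · refine ordAt_eq_of_valuation v _ ?_ (neg_ne_zero.mpr h)
    rw [Valuation.map_neg, valuation_eq_ofAdd v h]

lemma finAbs_mul (x y : K) : finAbs K v (x * y) = finAbs K v x * finAbs K v y := by
  rcases eq_or_ne x 0 with h | hx; · simp [finAbs, h]
  rcases eq_or_ne y 0 with h | hy; · simp [finAbs, h]
  rw [finAbs, finAbs, finAbs, if_neg hx, if_neg hy, if_neg (mul_ne_zero hx hy),
    ordAt_mul v hx hy, ← Real.rpow_add (resChar_real_pos v)]
  congr 1
  push_cast
  ring

lemma finAbs_le_finAbs {x y : K} (hx : x ≠ 0) (hy : y ≠ 0)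
    (h : ordAt K v x ≤ ordAt K v y) : finAbs K v y ≤ finAbs K v x := by
  rw [finAbs, finAbs, if_neg hx, if_neg hy]
  apply Real.rpow_le_rpow_left_iff (one_lt_resChar_real v) |>.mpr
  have he : (0:ℝ) < (eIdx K v : ℝ) := by
    exact_mod_cast Nat.pos_of_ne_zero (eIdx_ne_zero v)
  apply div_le_div_of_nonneg_right ?_ he.le |>.trans_eq rfl
  · simp only [neg_le_neg_iff]
    exact_mod_cast h

lemma finAbs_sub_le_max (x y : K) :
    finAbs K v (x - y) ≤ max (finAbs K v x) (finAbs K v y) := by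
  rcases eq_or_ne (x - y) 0 with h | hxy
  · rw [finAbs, if_pos h]
    exact le_max_of_le_left (finAbs_nonneg v x)
  rcases eq_or_ne x 0 with h | hx
  · subst h
    rw [zero_sub, show finAbs K v (-y) = finAbs K v y by
      rcases eq_or_ne y 0 with h | h
      · simp [h]
      · rw [finAbs, finAbs, if_neg h, if_neg (neg_ne_zero.mpr h), ordAt_neg]]
    exact le_max_right _ _
  rcases eq_or_ne y 0 with h | hy
  · subst h
    rw [sub_zero]
    exact le_max_left _ _
  have hmin := min_le_ordAt_sub v hx hy hxy
  rcases min_cases (ordAt K v x) (ordAt K v y) with ⟨heq, hle⟩ | ⟨heq, hle⟩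
  · rw [heq] at hmin
    exact le_max_of_le_left (finAbs_le_finAbs v hx hxy hmin)
  · rw [heq] at hmin
    exact le_max_of_le_right (finAbs_le_finAbs v hy hxy hmin)

lemma finAbs_eq_one {x : K} (hx : x ≠ 0) (h : ordAt K v x = 0) : finAbs K v x = 1 := by
  rw [finAbs, if_neg hx, h]
  simp

lemma log_finAbs {x : K} (hx : x ≠ 0) :
    Real.log (finAbs K v x) =
      (-(ordAt K v x : ℝ) / (eIdx K v : ℝ)) * Real.log (resChar K v : ℝ) := by
  rw [finAbs, if_neg hx, Real.log_rpow (resChar_real_pos v)]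

lemma finite_ordAt_ne_zero {x : K} (hx : x ≠ 0) :
    {v : HeightOneSpectrum (𝓞 K) | ordAt K v x ≠ 0}.Finite := by
  obtain ⟨a, b, hb, hab⟩ := IsFractionRing.div_surjective (A := 𝓞 K) x
  have hb0 : b ≠ 0 := nonZeroDivisors.ne_zero hb
  have ha0 : a ≠ 0 := by
    rintro rfl
    rw [map_zero, zero_div] at hab
    exact hx hab.symm
  have hbK : algebraMap (𝓞 K) K b ≠ 0 := by
    simpa using (map_ne_zero_iff _ (IsFractionRing.injective (𝓞 K) K)).mpr hb0
  apply Set.Finite.subset (Set.Finite.union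
    (Ideal.finite_factors (I := Ideal.span {a}) (by simpa using ha0))
    (Ideal.finite_factors (I := Ideal.span {b}) (by simpa using hb0)))
  intro v hv
  simp only [Set.mem_setOf_eq] at hv
  by_contra hcon
  simp only [Set.mem_union, Set.mem_setOf_eq, not_or] at hcon
  apply hv
  have hxa : x * algebraMap (𝓞 K) K b = algebraMap (𝓞 K) K a := by
    rw [← hab, div_mul_cancel₀ _ hbK]
  have := ordAt_mul v hx hbK
  rw [hxa, ordAt_algebraMap v ha0, ordAt_algebraMap v hb0] at this
  have hca : (Associates.mk v.asIdeal).count (Associates.mk (Ideal.span {a})).factors = 0 := by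
    by_contra hne
    exact hcon.1 ((Associates.count_ne_zero_iff_dvd (by simpa using ha0)
      (by apply v.irreducible)).mp hne)
  have hcb : (Associates.mk v.asIdeal).count (Associates.mk (Ideal.span {b})).factors = 0 := by
    by_contra hne
    exact hcon.2 ((Associates.count_ne_zero_iff_dvd (by simpa using hb0)
      (by apply v.irreducible)).mp hne)
  rw [hca, hcb] at this
  simpa using this.symm

end NumberField

namespace NumberField

variable {K : Type*} [Field K] [NumberField K]

lemma sum_fin_ord (a : 𝓞 K) (ha : a ≠ 0) :
    ∑ᶠ v : HeightOneSpectrum (𝓞 K),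
      (fIdx K v : ℝ) * (ordAt K v (algebraMap (𝓞 K) K a) : ℝ) * Real.log (resChar K v)
    = Real.log (Ideal.absNorm (Ideal.span {a}) : ℝ) := by
  have hI : Ideal.span {a} ≠ (0 : Ideal (𝓞 K)) := by simpa using ha
  have hfin : (Function.mulSupport fun v : HeightOneSpectrum (𝓞 K) =>
      v.maxPowDividing (Ideal.span {a})).Finite := Ideal.finite_mulSupport hI
  set S : Finset (HeightOneSpectrum (𝓞 K)) := hfin.toFinset with hS
  -- if v ∉ S then the count is zero
  have hnotS : ∀ v : HeightOneSpectrum (𝓞 K), v ∉ S →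
      (Associates.mk v.asIdeal).count (Associates.mk (Ideal.span {a})).factors = 0 := by
    intro v hv
    rw [hS, Set.Finite.mem_toFinset, Function.mem_mulSupport, not_not,
      IsDedekindDomain.HeightOneSpectrum.maxPowDividing] at hv
    by_contra hne
    have hle : v.asIdeal ^ ((Associates.mk v.asIdeal).count
        (Associates.mk (Ideal.span {a})).factors) ≤ v.asIdeal :=
      Ideal.pow_le_self hne
    rw [hv, Ideal.one_eq_top] at hle
    exact v.isMaximal.ne_top (top_le_iff.mp hle)
  -- absNorm of the factorization
  have hfact := Ideal.finprod_heightOneSpectrum_factorization hI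
  have habs : (Ideal.absNorm (Ideal.span {a})) =
      ∏ v ∈ S, Ideal.absNorm (v.maxPowDividing (Ideal.span {a})) := by
    conv_lhs => rw [← hfact]
    have hmf := MonoidHom.map_finprod (Ideal.absNorm (S := 𝓞 K)).toMonoidHom hfin
    refine hmf.trans (finprod_eq_prod_of_mulSupport_subset _ ?_)
    intro v hv
    rw [Function.mem_mulSupport] at hv
    have : v ∈ Function.mulSupport fun v : HeightOneSpectrum (𝓞 K) =>
        v.maxPowDividing (Ideal.span {a}) := by
      rw [Function.mem_mulSupport]
      intro hone
      exact hv (by rw [hone, map_one])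
    simpa [hS, Set.Finite.coe_toFinset] using this
  -- now compute logs
  rw [habs]
  push_cast
  rw [Real.log_prod (by
    intro v hv
    rw [IsDedekindDomain.HeightOneSpectrum.maxPowDividing, map_pow, ← resChar_pow_fIdx]
    exact_mod_cast pow_ne_zero _ (pow_ne_zero _ (resChar_prime v).ne_zero))]
  rw [finsum_eq_sum_of_support_subset _ (s := S) (by
    intro v hv
    rw [Function.mem_support] at hv
    by_contra hvS
    apply hv
    have h0 := hnotS v hvS
    rw [ordAt_algebraMap v ha, h0]
    simp)]
  apply Finset.sum_congr rfl
  intro v _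
  rw [IsDedekindDomain.HeightOneSpectrum.maxPowDividing, map_pow, ← resChar_pow_fIdx,
    ordAt_algebraMap v ha]
  push_cast
  rw [Real.log_pow, Real.log_pow]
  push_cast
  ring

end NumberField

namespace NumberField

variable {K : Type*} [Field K] [NumberField K]

lemma absNorm_span_eq_abs_norm (a : 𝓞 K) :
    ((Ideal.absNorm (Ideal.span {a}) : ℝ)) =
      |((Algebra.norm ℚ (algebraMap (𝓞 K) K a) : ℚ) : ℝ)| := by
  rw [Ideal.absNorm_span_singleton]
  rw [show (Algebra.norm ℚ (algebraMap (𝓞 K) K a) : ℚ) = ((Algebra.norm ℤ a : ℤ) : ℚ) from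
    (Algebra.coe_norm_int a).symm]
  push_cast [Nat.cast_natAbs]
  rfl

lemma finsupport_ord (z : K) (c : HeightOneSpectrum (𝓞 K) → ℝ) (hz : z ≠ 0) :
    (Function.support fun v : HeightOneSpectrum (𝓞 K) =>
      (fIdx K v : ℝ) * (ordAt K v z : ℝ) * c v).Finite := by
  apply Set.Finite.subset (finite_ordAt_ne_zero hz)
  intro v hv
  simp only [Function.mem_support] at hv
  simp only [Set.mem_setOf_eq]
  intro h0
  exact hv (by rw [h0]; simp)

lemma sum_fin_ord_eq_log_norm {z : K} (hz : z ≠ 0) :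
    ∑ᶠ v : HeightOneSpectrum (𝓞 K),
      (fIdx K v : ℝ) * (ordAt K v z : ℝ) * Real.log (resChar K v)
    = Real.log |((Algebra.norm ℚ z : ℚ) : ℝ)| := by
  obtain ⟨a, b, hb, hab⟩ := IsFractionRing.div_surjective (A := 𝓞 K) z
  have hb0 : b ≠ 0 := nonZeroDivisors.ne_zero hb
  have ha0 : a ≠ 0 := by
    rintro rfl
    rw [map_zero, zero_div] at hab
    exact hz hab.symm
  have hbK : algebraMap (𝓞 K) K b ≠ 0 := by
    simpa using (map_ne_zero_iff _ (IsFractionRing.injective (𝓞 K) K)).mpr hb0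
  have haK : algebraMap (𝓞 K) K a ≠ 0 := by
    simpa using (map_ne_zero_iff _ (IsFractionRing.injective (𝓞 K) K)).mpr ha0
  have hza : z * algebraMap (𝓞 K) K b = algebraMap (𝓞 K) K a := by
    rw [← hab, div_mul_cancel₀ _ hbK]
  have hord : ∀ v : HeightOneSpectrum (𝓞 K),
      ordAt K v z = ordAt K v (algebraMap (𝓞 K) K a) - ordAt K v (algebraMap (𝓞 K) K b) := by
    intro v
    have := ordAt_mul v hz hbK
    rw [hza] at this
    linarith
  have hsplit : (fun v : HeightOneSpectrum (𝓞 K) =>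
      (fIdx K v : ℝ) * (ordAt K v z : ℝ) * Real.log (resChar K v)) =
      fun v => (fIdx K v : ℝ) * (ordAt K v (algebraMap (𝓞 K) K a) : ℝ) * Real.log (resChar K v)
        - (fIdx K v : ℝ) * (ordAt K v (algebraMap (𝓞 K) K b) : ℝ) * Real.log (resChar K v) := by
    funext v
    rw [hord v]
    push_cast
    ring
  rw [hsplit, finsum_sub_distrib (finsupport_ord _ _ haK) (finsupport_ord _ _ hbK),
    sum_fin_ord a ha0, sum_fin_ord b hb0, absNorm_span_eq_abs_norm, absNorm_span_eq_abs_norm]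
  have hnz : ∀ w : K, w ≠ 0 → ((Algebra.norm ℚ w : ℚ) : ℝ) ≠ 0 := by
    intro w hw
    exact_mod_cast (Algebra.norm_ne_zero_iff).mpr hw
  rw [← Real.log_div (abs_ne_zero.mpr (hnz _ haK)) (abs_ne_zero.mpr (hnz _ hbK)), ← abs_div]
  congr 2
  rw [← Rat.cast_div]
  congr 1
  have hNz : Algebra.norm ℚ z * Algebra.norm ℚ (algebraMap (𝓞 K) K b)
      = Algebra.norm ℚ (algebraMap (𝓞 K) K a) := by
    rw [← map_mul, hza]
  field_simp [Algebra.norm_ne_zero_iff.mpr hbK] at hNz ⊢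
  linarith [hNz]

end NumberField

namespace NumberField

variable {K : Type*} [Field K] [NumberField K]

lemma finsum_place_eq (f : Place K → ℝ)
    (hf : (Function.support fun v : HeightOneSpectrum (𝓞 K) => f (Sum.inr v)).Finite) :
    ∑ᶠ v : Place K, f v =
      (∑ w : InfinitePlace K, f (Sum.inl w)) +
        ∑ᶠ v : HeightOneSpectrum (𝓞 K), f (Sum.inr v) := by
  rw [finsum_eq_sum_of_support_subset f
    (s := Finset.disjSum Finset.univ hf.toFinset) (by
      intro p hp
      rcases p with w | v
      · simp
      · simp only [Finset.coe_insert, Finset.mem_coe, Finset.inr_mem_disjSum,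
          Set.Finite.mem_toFinset]
        exact hp)]
  rw [Finset.sum_disjSum]
  congr 1
  rw [finsum_eq_sum_of_support_subset _ (s := hf.toFinset) (by
    intro v hv
    simpa using hv)]

lemma log_finAbs_eq {z : K} (hz : z ≠ 0) (v : HeightOneSpectrum (𝓞 K)) :
    nv K (Sum.inr v) * Real.log (finAbs K v z) =
      -((1 : ℝ) / (Module.finrank ℚ K : ℝ)) *
        ((fIdx K v : ℝ) * (ordAt K v z : ℝ) * Real.log (resChar K v)) := by
  rw [log_finAbs v hz, nv, localDeg]
  have he : ((eIdx K v : ℝ)) ≠ 0 := by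
    exact_mod_cast eIdx_ne_zero v
  have key : ∀ (e f o L d : ℝ), e ≠ 0 →
      (e * f) / d * (-o / e * L) = -(1/d) * (f * o * L) := by
    intro e f o L d he'
    rw [show (e * f) / d * (-o / e * L) = (e / e) * (f / d * (-o * L)) by ring, div_self he']
    ring
  push_cast
  exact key _ _ _ _ _ he

lemma productFormula {z : K} (hz : z ≠ 0) :
    ∑ᶠ v : Place K, nv K v * Real.log (placeAbs K v z) = 0 := by
  have hd : ((Module.finrank ℚ K : ℝ)) ≠ 0 := by
    exact_mod_cast (Module.finrank_pos (R := ℚ) (M := K)).ne'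
  have hsupp : (Function.support fun v : HeightOneSpectrum (𝓞 K) =>
      nv K (Sum.inr v) * Real.log (placeAbs K (Sum.inr v) z)).Finite := by
    apply Set.Finite.subset (finite_ordAt_ne_zero hz)
    intro v hv
    simp only [Function.mem_support] at hv
    simp only [Set.mem_setOf_eq]
    intro h0
    apply hv
    show nv K (Sum.inr v) * Real.log (finAbs K v z) = 0
    rw [finAbs_eq_one v hz h0, Real.log_one, mul_zero]
  rw [finsum_place_eq _ hsupp]
  -- archimedean part
  have harch : (∑ w : InfinitePlace K, nv K (Sum.inl w) * Real.log (placeAbs K (Sum.inl w) z)) =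
      (1 / (Module.finrank ℚ K : ℝ)) * Real.log |((Algebra.norm ℚ z : ℚ) : ℝ)| := by
    have hlog : Real.log |((Algebra.norm ℚ z : ℚ) : ℝ)| =
        ∑ w : InfinitePlace K, (InfinitePlace.mult w : ℝ) * Real.log (w z) := by
      have hprod := InfinitePlace.prod_eq_abs_norm (K := K) z
      have := congrArg Real.log hprod
      rw [Real.log_prod (fun w _ => by
        exact pow_ne_zero _ (ne_of_gt (InfinitePlace.pos_iff.mpr hz)))] at this
      rw [Rat.cast_abs] at this
      rw [← this]
      apply Finset.sum_congr rfl
      intro w _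
      rw [Real.log_pow]
    rw [hlog, Finset.mul_sum]
    apply Finset.sum_congr rfl
    intro w _
    show (localDeg K (Sum.inl w) : ℝ) / _ * Real.log (w z) = _
    rw [localDeg]
    ring
  rw [harch]
  -- finite part
  have hfin : (∑ᶠ v : HeightOneSpectrum (𝓞 K),
      nv K (Sum.inr v) * Real.log (placeAbs K (Sum.inr v) z)) =
      -((1 : ℝ) / (Module.finrank ℚ K : ℝ)) * Real.log |((Algebra.norm ℚ z : ℚ) : ℝ)| := by
    have : (fun v : HeightOneSpectrum (𝓞 K) =>
        nv K (Sum.inr v) * Real.log (placeAbs K (Sum.inr v) z)) =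
        fun v => -((1 : ℝ) / (Module.finrank ℚ K : ℝ)) *
          ((fIdx K v : ℝ) * (ordAt K v z : ℝ) * Real.log (resChar K v)) := by
      funext v
      exact log_finAbs_eq hz v
    rw [this, ← mul_finsum _ _, sum_fin_ord_eq_log_norm hz]
  rw [hfin]
  ring

end NumberField

namespace NumberField

variable {K : Type*} [Field K] [NumberField K]

@[simp] lemma placeAbs_inl (w : InfinitePlace K) (z : K) :
    placeAbs K (Sum.inl w) z = w z := rfl

@[simp] lemma placeAbs_inr (u : HeightOneSpectrum (𝓞 K)) (z : K) :
    placeAbs K (Sum.inr u) z = finAbs K u z := rfl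

lemma placeAbs_nonneg (v : Place K) (z : K) : 0 ≤ placeAbs K v z := by
  cases v with
  | inl w => exact apply_nonneg w z
  | inr u => exact finAbs_nonneg u z

lemma placeAbs_pos (v : Place K) {z : K} (hz : z ≠ 0) : 0 < placeAbs K v z := by
  cases v with
  | inl w => exact InfinitePlace.pos_iff.mpr hz
  | inr u => exact finAbs_pos u hz

lemma placeAbs_mul (v : Place K) (a b : K) :
    placeAbs K v (a * b) = placeAbs K v a * placeAbs K v b := by
  cases v with
  | inl w => exact map_mul w a b
  | inr u => exact finAbs_mul u a b

lemma nv_nonneg (v : Place K) : 0 ≤ nv K v := by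
  rw [nv]
  positivity

lemma supAbs_pos {n : ℕ} (v : Place K) {x : Fin (n + 1) → K} (hx : x ≠ 0) :
    0 < supAbs K v x := by
  obtain ⟨k, hk⟩ := Function.ne_iff.mp hx
  exact lt_of_lt_of_le (placeAbs_pos v hk)
    (Finset.le_sup' (fun i => placeAbs K v (x i)) (Finset.mem_univ k))

lemma le_supAbs {n : ℕ} (v : Place K) (x : Fin (n + 1) → K) (k : Fin (n + 1)) :
    placeAbs K v (x k) ≤ supAbs K v x :=
  Finset.le_sup' (fun i => placeAbs K v (x i)) (Finset.mem_univ k)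

lemma supAbs_eq_one {n : ℕ} (u : HeightOneSpectrum (𝓞 K)) {x : Fin (n + 1) → K} (hx : x ≠ 0)
    (h : ∀ k, ordAt K u (x k) = 0) : supAbs K (Sum.inr u) x = 1 := by
  apply le_antisymm
  · apply Finset.sup'_le
    intro k _
    rcases eq_or_ne (x k) 0 with h0 | h0
    · show finAbs K u (x k) ≤ 1
      rw [h0]
      simp [finAbs]
    · exact le_of_eq (finAbs_eq_one u h0 (h k))
  · obtain ⟨k, hk⟩ := Function.ne_iff.mp hx
    calc (1 : ℝ) = finAbs K u (x k) := (finAbs_eq_one u hk (h k)).symm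
    _ ≤ _ := Finset.le_sup' (fun i => placeAbs K (Sum.inr u) (x i)) (Finset.mem_univ k)

lemma finAbs_le_one {u : HeightOneSpectrum (𝓞 K)} {z : K} (h : ordAt K u z = 0) :
    finAbs K u z ≤ 1 := by
  rcases eq_or_ne z 0 with h0 | h0
  · rw [h0]; simp [finAbs]
  · exact le_of_eq (finAbs_eq_one u h0 h)

end NumberField

namespace NumberField

variable {K : Type*} [Field K] [NumberField K]

lemma infinitePlace_sub_le (w : InfinitePlace K) (a b : K) : w (a - b) ≤ w a + w b :=
  w.1.sub_le_add a b

lemma ordAt_zero (u : HeightOneSpectrum (𝓞 K)) : ordAt K u (0 : K) = 0 := by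
  simp [ordAt]

lemma sum_nv_inl : ∑ w : InfinitePlace K, nv K (Sum.inl w : Place K) = 1 := by
  have hd : ((Module.finrank ℚ K : ℝ)) ≠ 0 := by
    exact_mod_cast (Module.finrank_pos (R := ℚ) (M := K)).ne'
  simp only [nv, localDeg]
  rw [← Finset.sum_div]
  rw [← Nat.cast_sum, InfinitePlace.sum_mult_eq]
  exact div_self hd

end NumberField

/-- Lemma 3.1 of Baker–Silverman: Let `K` be a number field, let `T` be any
set of places of `K`, and let `x ≠ y` be distinct points of `ℙⁿ(K)`.  Then
`h(x) + h(y) ≥ ∑_{v ∈ T} n_v δ_v(x,y) - log 2`. -/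
theorem height_add_height_ge_sum_delta_sub_log_two
    {K : Type*} [Field K] [NumberField K] {n : ℕ}
    (T : Set (NumberField.Place K)) (x y : Fin (n + 1) → K)
    (hx : x ≠ 0) (hy : y ≠ 0)
    (hxy : ∃ i j, x i * y j ≠ x j * y i) :
    NumberField.heightProj K x + NumberField.heightProj K y ≥
      (∑ᶠ v ∈ T, NumberField.nv K v * NumberField.deltaAt K v x y) - Real.log 2 := by
  classical
  obtain ⟨i, j, hWne⟩ := hxy
  set W : K := x i * y j - x j * y i with hWdef
  have hW0 : W ≠ 0 := sub_ne_zero.mpr hWne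
  set SW : Place K → ℝ := fun v => Finset.univ.sup' Finset.univ_nonempty
    (fun p : Fin (n+1) × Fin (n+1) =>
      placeAbs K v (x p.1 * y p.2 - x p.2 * y p.1)) with hSWdef
  have hWle : ∀ v, placeAbs K v W ≤ SW v := fun v =>
    Finset.le_sup' (fun p : Fin (n+1) × Fin (n+1) =>
      placeAbs K v (x p.1 * y p.2 - x p.2 * y p.1)) (Finset.mem_univ (i, j))
  have hSWpos : ∀ v, 0 < SW v := fun v => lt_of_lt_of_le (placeAbs_pos v hW0) (hWle v)
  have hsupx : ∀ v, 0 < supAbs K v x := fun v => supAbs_pos v hx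
  have hsupy : ∀ v, 0 < supAbs K v y := fun v => supAbs_pos v hy
  have hdelta : ∀ v, deltaAt K v x y =
      Real.log (supAbs K v x) + Real.log (supAbs K v y) - Real.log (SW v) := by
    intro v
    show -Real.log (SW v / (supAbs K v x * supAbs K v y)) = _
    rw [Real.log_div (ne_of_gt (hSWpos v)) (ne_of_gt (mul_pos (hsupx v) (hsupy v))),
      Real.log_mul (ne_of_gt (hsupx v)) (ne_of_gt (hsupy v))]
    ring
  -- the finite set of bad finite places
  have hfinset : ∀ z : K, {u : HeightOneSpectrum (𝓞 K) | ordAt K u z ≠ 0}.Finite := by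
    intro z
    rcases eq_or_ne z 0 with rfl | hz
    · convert Set.finite_empty
      ext u
      simp [ordAt_zero]
    · exact finite_ordAt_ne_zero hz
  set bad : Set (HeightOneSpectrum (𝓞 K)) :=
    (⋃ k, {u | ordAt K u (x k) ≠ 0}) ∪ ((⋃ k, {u | ordAt K u (y k) ≠ 0}) ∪
      {u | ordAt K u W ≠ 0}) with hbaddef
  have hbadfin : bad.Finite := ((Set.finite_iUnion fun k => hfinset (x k)).union
    ((Set.finite_iUnion fun k => hfinset (y k)).union (hfinset W)))
  set S : Finset (Place K) := Finset.univ.disjSum hbadfin.toFinset with hSdef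
  have hinlS : ∀ w : InfinitePlace K, (Sum.inl w : Place K) ∈ S := by
    intro w
    rw [hSdef, Finset.inl_mem_disjSum]
    exact Finset.mem_univ w
  have hinrS : ∀ u : HeightOneSpectrum (𝓞 K), u ∈ bad → (Sum.inr u : Place K) ∈ S := by
    intro u hu
    rw [hSdef, Finset.inr_mem_disjSum, Set.Finite.mem_toFinset]
    exact hu
  -- good places
  have hgood : ∀ u : HeightOneSpectrum (𝓞 K), u ∉ bad →
      supAbs K (Sum.inr u) x = 1 ∧ supAbs K (Sum.inr u) y = 1 ∧
        placeAbs K (Sum.inr u) W = 1 ∧ SW (Sum.inr u) = 1 := by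
    intro u hu
    rw [hbaddef] at hu
    simp only [Set.mem_union, Set.mem_iUnion, Set.mem_setOf_eq, not_or, not_exists,
      not_not] at hu
    obtain ⟨h1, h2, h3⟩ := hu
    have hsx : supAbs K (Sum.inr u) x = 1 := supAbs_eq_one u hx h1
    have hsy : supAbs K (Sum.inr u) y = 1 := supAbs_eq_one u hy h2
    have hw1 : placeAbs K (Sum.inr u) W = 1 := finAbs_eq_one u hW0 h3
    refine ⟨hsx, hsy, hw1, le_antisymm ?_ (hw1 ▸ hWle (Sum.inr u))⟩
    apply Finset.sup'_le
    intro p _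
    show finAbs K u (x p.1 * y p.2 - x p.2 * y p.1) ≤ 1
    refine le_trans (finAbs_sub_le_max u _ _) (max_le ?_ ?_)
    · rw [finAbs_mul]
      exact mul_le_one₀ (finAbs_le_one (h1 p.1)) (finAbs_nonneg u _) (finAbs_le_one (h2 p.2))
    · rw [finAbs_mul]
      exact mul_le_one₀ (finAbs_le_one (h1 p.2)) (finAbs_nonneg u _) (finAbs_le_one (h2 p.1))
  -- heights as finite sums over S
  have hsubx : (Function.support fun v => nv K v * Real.log (supAbs K v x)) ⊆ ↑S := by
    intro v hv
    rcases v with w | u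
    · exact hinlS w
    · by_contra hu
      have hu' : u ∉ bad := by
        intro hb
        exact hu (hinrS u hb)
      apply hv
      show nv K (Sum.inr u : Place K) * Real.log (supAbs K (Sum.inr u) x) = 0
      rw [(hgood u hu').1, Real.log_one, mul_zero]
  have hsuby : (Function.support fun v => nv K v * Real.log (supAbs K v y)) ⊆ ↑S := by
    intro v hv
    rcases v with w | u
    · exact hinlS w
    · by_contra hu
      have hu' : u ∉ bad := fun hb => hu (hinrS u hb)
      apply hv
      show nv K (Sum.inr u : Place K) * Real.log (supAbs K (Sum.inr u) y) = 0
      rw [(hgood u hu').2.1, Real.log_one, mul_zero]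
  have hHx : heightProj K x = ∑ v ∈ S, nv K v * Real.log (supAbs K v x) :=
    finsum_eq_sum_of_support_subset _ hsubx
  have hHy : heightProj K y = ∑ v ∈ S, nv K v * Real.log (supAbs K v y) :=
    finsum_eq_sum_of_support_subset _ hsuby
  -- product formula over S
  have hsubW : (Function.support fun v => nv K v * Real.log (placeAbs K v W)) ⊆ ↑S := by
    intro v hv
    rcases v with w | u
    · exact hinlS w
    · by_contra hu
      have hu' : u ∉ bad := fun hb => hu (hinrS u hb)
      apply hv
      show nv K (Sum.inr u : Place K) * Real.log (placeAbs K (Sum.inr u) W) = 0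
      rw [(hgood u hu').2.2.1, Real.log_one, mul_zero]
  have hPF : ∑ v ∈ S, nv K v * Real.log (placeAbs K v W) = 0 := by
    rw [← finsum_eq_sum_of_support_subset _ hsubW]
    exact productFormula hW0
  -- archimedean constant
  set A : Place K → ℝ :=
    Sum.elim (fun w : InfinitePlace K => nv K (Sum.inl w : Place K) * Real.log 2)
      (fun _ => (0 : ℝ)) with hAdef
  have hAnonneg : ∀ v, 0 ≤ A v := by
    intro v
    rcases v with w | u
    · exact mul_nonneg (nv_nonneg _) (Real.log_nonneg one_le_two)
    · exact le_refl _
  have hA : ∑ v ∈ S, A v = Real.log 2 := by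
    rw [hSdef, Finset.sum_disjSum]
    simp only [hAdef, Sum.elim_inl, Sum.elim_inr, Finset.sum_const_zero, add_zero]
    rw [← Finset.sum_mul, sum_nv_inl, one_mul]
  -- the majorant G
  set G : Place K → ℝ := fun v => nv K v * (Real.log (supAbs K v x) + Real.log (supAbs K v y)
    - Real.log (placeAbs K v W)) + A v with hGdef
  have hGnonneg : ∀ v, 0 ≤ G v := by
    intro v
    rcases v with w | u
    · have hsub : placeAbs K (Sum.inl w) W ≤
          2 * (supAbs K (Sum.inl w) x * supAbs K (Sum.inl w) y) := by
        show w (x i * y j - x j * y i) ≤ _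
        calc w (x i * y j - x j * y i) ≤ w (x i * y j) + w (x j * y i) :=
              infinitePlace_sub_le w _ _
        _ = w (x i) * w (y j) + w (x j) * w (y i) := by rw [map_mul, map_mul]
        _ ≤ supAbs K (Sum.inl w) x * supAbs K (Sum.inl w) y
              + supAbs K (Sum.inl w) x * supAbs K (Sum.inl w) y := by
            apply add_le_add
            · exact mul_le_mul (le_supAbs (Sum.inl w) x i) (le_supAbs (Sum.inl w) y j)
                (apply_nonneg w _) (le_of_lt (hsupx _))
            · exact mul_le_mul (le_supAbs (Sum.inl w) x j) (le_supAbs (Sum.inl w) y i)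
                (apply_nonneg w _) (le_of_lt (hsupx _))
        _ = 2 * (supAbs K (Sum.inl w) x * supAbs K (Sum.inl w) y) := by ring
      have hlog := Real.log_le_log (placeAbs_pos (Sum.inl w) hW0) hsub
      rw [Real.log_mul two_ne_zero (ne_of_gt (mul_pos (hsupx _) (hsupy _))),
        Real.log_mul (ne_of_gt (hsupx _)) (ne_of_gt (hsupy _))] at hlog
      have hnn := nv_nonneg (Sum.inl w : Place K)
      have : G (Sum.inl w) = nv K (Sum.inl w) * ((Real.log (supAbs K (Sum.inl w) x)
          + Real.log (supAbs K (Sum.inl w) y) - Real.log (placeAbs K (Sum.inl w) W))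
          + Real.log 2) := by
        rw [hGdef]
        simp only [hAdef, Sum.elim_inl]
        ring
      rw [this]
      exact mul_nonneg hnn (by linarith)
    · have hsub : placeAbs K (Sum.inr u) W ≤
          supAbs K (Sum.inr u) x * supAbs K (Sum.inr u) y := by
        show finAbs K u (x i * y j - x j * y i) ≤ _
        refine le_trans (finAbs_sub_le_max u _ _) (max_le ?_ ?_)
        · rw [finAbs_mul]
          exact mul_le_mul (le_supAbs (Sum.inr u) x i) (le_supAbs (Sum.inr u) y j)
            (finAbs_nonneg u _) (le_of_lt (hsupx _))
        · rw [finAbs_mul]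
          exact mul_le_mul (le_supAbs (Sum.inr u) x j) (le_supAbs (Sum.inr u) y i)
            (finAbs_nonneg u _) (le_of_lt (hsupx _))
      have hlog := Real.log_le_log (placeAbs_pos (Sum.inr u) hW0) hsub
      rw [Real.log_mul (ne_of_gt (hsupx _)) (ne_of_gt (hsupy _))] at hlog
      have : G (Sum.inr u) = nv K (Sum.inr u) * (Real.log (supAbs K (Sum.inr u) x)
          + Real.log (supAbs K (Sum.inr u) y) - Real.log (placeAbs K (Sum.inr u) W)) := by
        rw [hGdef]
        simp only [hAdef, Sum.elim_inr, add_zero]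
      rw [this]
      exact mul_nonneg (nv_nonneg _) (by linarith)
  -- pointwise comparison
  have hTle : ∀ v, Set.indicator T (fun v => nv K v * deltaAt K v x y) v ≤ G v := by
    intro v
    by_cases hv : v ∈ T
    · rw [Set.indicator_of_mem hv]
      have h1 : deltaAt K v x y ≤ Real.log (supAbs K v x) + Real.log (supAbs K v y)
          - Real.log (placeAbs K v W) := by
        rw [hdelta v]
        have := Real.log_le_log (placeAbs_pos v hW0) (hWle v)
        linarith
      have h2 := mul_le_mul_of_nonneg_left h1 (nv_nonneg v)
      refine le_trans h2 ?_
      have h3 := hAnonneg v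
      rw [hGdef]
      dsimp only
      linarith
    · rw [Set.indicator_of_notMem hv]
      exact hGnonneg v
  -- the left side as a finite sum
  have hLHS : (∑ᶠ v ∈ T, nv K v * deltaAt K v x y) =
      ∑ v ∈ S, Set.indicator T (fun v => nv K v * deltaAt K v x y) v := by
    rw [finsum_mem_def]
    apply finsum_eq_sum_of_support_subset
    intro v hv
    have hv2 : Set.indicator T (fun v => nv K v * deltaAt K v x y) v ≠ 0 := hv
    have hv' : nv K v * deltaAt K v x y ≠ 0 := by
      intro h0
      exact hv2 (by simp [Set.indicator_apply, h0])
    rcases v with w | u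
    · exact hinlS w
    · by_contra hu
      have hu' : u ∉ bad := fun hb => hu (hinrS u hb)
      apply hv'
      obtain ⟨hsx, hsy, hw1, hsw⟩ := hgood u hu'
      rw [hdelta (Sum.inr u), hsx, hsy, hsw, Real.log_one]
      ring
  -- put everything together
  have hGsum : ∑ v ∈ S, G v = heightProj K x + heightProj K y + Real.log 2 := by
    have hsplit : ∀ v ∈ S, G v = (nv K v * Real.log (supAbs K v x)
        + nv K v * Real.log (supAbs K v y) - nv K v * Real.log (placeAbs K v W)) + A v := by
      intro v _
      rw [hGdef]
      dsimp only
      ring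
    rw [Finset.sum_congr rfl hsplit, Finset.sum_add_distrib, Finset.sum_sub_distrib,
      Finset.sum_add_distrib, ← hHx, ← hHy, hPF, hA]
    ring
  have hfinal : (∑ᶠ v ∈ T, nv K v * deltaAt K v x y) ≤
      heightProj K x + heightProj K y + Real.log 2 := by
    rw [hLHS, ← hGsum]
    exact Finset.sum_le_sum fun v _ => hTle v
  linarith
end

section
/- Let M be an abelian group, let m ≥ 1 be an integer, and let σ : M → M be an additive group endomorphism with σ^m = id. Let Φ(X) ∈ ℤ[X] be a monic polynomial of degree 2g all of whose complex roots have absolute value q^{1/2} for some real number q > 1. If P ∈ M satisfies Φ(σ)(P) = 0, then P is a torsion element of M (i.e., N·P = 0 for some integer N ≥ 1). -/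
open Polynomial

lemma clear_denoms (u : Polynomial ℚ) : ∃ (d : ℤ) (u₀ : Polynomial ℤ), d ≠ 0 ∧
    u₀.map (algebraMap ℤ ℚ) = C (d : ℚ) * u := by
  obtain ⟨b, hb, h⟩ := IsLocalization.integerNormalization_spec (nonZeroDivisors ℤ) u
  refine ⟨b, IsLocalization.integerNormalization (nonZeroDivisors ℤ) u,
    mem_nonZeroDivisors_iff_ne_zero.mp hb, ?_⟩
  ext i
  rw [h, coeff_smul, coeff_C_mul]
  rw [zsmul_eq_mul]

lemma addMonoidEnd_mul_apply {M : Type*} [AddCommMonoid M] (f g : AddMonoid.End M) (x : M) :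
    (f * g) x = f (g x) := rfl

/-- abstract form of Theorem 4.1(c) of Baker–Silverman: Let `M` be an
abelian group, `m ≥ 1`, and `σ : M → M` an additive endomorphism with `σ^m = id`.  Let
`Φ ∈ ℤ[X]` be a monic polynomial of degree `2g` all of whose complex roots have absolute
value `q^{1/2}` for some real `q > 1`.  If `P ∈ M` satisfies `Φ(σ)(P) = 0`, then `P` is a
torsion element: `N • P = 0` for some integer `N ≥ 1`. -/
theorem torsion_of_charpoly_frobenius_annihilates
    {M : Type*} [AddCommGroup M] (m : ℕ) (hm : 1 ≤ m)
    (σ : AddMonoid.End M) (hσ : σ ^ m = 1)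
    (g : ℕ) (q : ℝ) (hq : 1 < q)
    (Φ : Polynomial ℤ) (hmonic : Φ.Monic) (hdeg : Φ.natDegree = 2 * g)
    (hroots : ∀ z : ℂ, aeval z Φ = 0 → ‖z‖ = Real.sqrt q)
    (P : M) (hP : aeval σ Φ P = 0) :
    ∃ N : ℕ, 1 ≤ N ∧ N • P = 0 := by
  set Ψ : Polynomial ℤ := X ^ m - 1 with hΨ
  have hPΨ : aeval σ Ψ P = 0 := by
    simp [hΨ, hσ, sub_self]
  have hcop : IsCoprime (Φ.map (algebraMap ℤ ℚ)) (Ψ.map (algebraMap ℤ ℚ)) := by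
    rw [Polynomial.isCoprime_iff_aeval_ne_zero_of_isAlgClosed ℚ ℂ]
    intro z
    by_cases hz : aeval z (Φ.map (algebraMap ℤ ℚ)) = 0
    · right
      have hzΦ : aeval z Φ = 0 := by rwa [aeval_map_algebraMap] at hz
      have h1 : (1 : ℝ) < ‖z‖ := by
        rw [hroots z hzΦ]
        rw [Real.lt_sqrt (by norm_num)]
        simpa using hq
      rw [aeval_map_algebraMap]
      simp only [hΨ, map_sub, map_pow, map_one, aeval_X]
      intro h0
      have hzm : z ^ m = 1 := by linear_combination h0
      have habs1 : ‖z‖ ^ m = 1 := by rw [← norm_pow, hzm, norm_one]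
      have hlt : (1:ℝ) < ‖z‖ ^ m := one_lt_pow₀ h1 (by omega)
      rw [habs1] at hlt; exact lt_irrefl 1 hlt
    · left; exact hz
  obtain ⟨u, v, huv⟩ := hcop
  obtain ⟨du, u₀, hdu, hu₀⟩ := clear_denoms u
  obtain ⟨dv, v₀, hdv, hv₀⟩ := clear_denoms v
  have key : C dv * u₀ * Φ + C du * v₀ * Ψ = C (du * dv) := by
    apply Polynomial.map_injective (algebraMap ℤ ℚ)
      (fun a b h => by exact_mod_cast h)
    have e : ∀ n : ℤ, algebraMap ℤ ℚ n = (n : ℚ) := fun n => by simp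
    rw [Polynomial.map_add, Polynomial.map_mul, Polynomial.map_mul, Polynomial.map_mul,
      Polynomial.map_mul, Polynomial.map_C, Polynomial.map_C, Polynomial.map_C, hu₀, hv₀,
      e, e, e]
    push_cast
    rw [C_mul]
    linear_combination (C (du:ℚ) * C (dv:ℚ)) * huv
  have happ : aeval σ (C dv * u₀ * Φ) P + aeval σ (C du * v₀ * Ψ) P
      = aeval σ (C (du * dv)) P := by
    rw [← key, map_add]; rfl
  have h1 : aeval σ (C dv * u₀ * Φ) P = 0 := by
    simp only [map_mul, addMonoidEnd_mul_apply, hP, map_zero]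
  have h2 : aeval σ (C du * v₀ * Ψ) P = 0 := by
    simp only [map_mul, addMonoidEnd_mul_apply, hPΨ, map_zero]
  have h3 : aeval σ (C (du * dv)) P = (du * dv) • P := by
    rw [aeval_C, algebraMap_int_eq, eq_intCast, AddMonoid.End.intCast_apply]
  have hzero : (du * dv) • P = 0 := by
    rw [← h3, ← happ, h1, h2, add_zero]
  refine ⟨(du * dv).natAbs, ?_, ?_⟩
  · have : du * dv ≠ 0 := mul_ne_zero hdu hdv
    omega
  · rw [← natCast_zsmul]
    rcases Int.natAbs_eq (du * dv) with h | h
    · rw [← h]; exact hzero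
    · rw [show (((du * dv).natAbs : ℤ)) = -(du * dv) by omega, neg_zsmul, hzero, neg_zero]
end

section
/- Let p be a prime number and m a positive integer divisible by p. Let ζ be a primitive m-th root of unity and let τ be the automorphism of ℚ(ζ) determined by τ(ζ) = ζ^t, where t is an integer coprime to m with t ≡ 1 (mod m/p). Then for every α ∈ ℤ[ζ], one has τ(α)^p ≡ α^p (mod p·ℤ[ζ]). -/
/-- Amoroso–Dvornicich congruence, cyclotomic case: Let `p` be a prime and
`m` a positive integer divisible by `p`.  Let `ζ` be a primitive `m`-th root of unity and `τ`
the automorphism determined by `τ(ζ) = ζ^t`, where `t` is coprime to `m` and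
`t ≡ 1 (mod m/p)`.  Then for every `α ∈ ℤ[ζ]` we have `τ(α)^p ≡ α^p (mod p·ℤ[ζ])`. -/
theorem cyclotomic_pow_p_congruence
    {F : Type*} [Field F] [CharZero F]
    (p m : ℕ) (hp : p.Prime) (hm : 0 < m) (hpm : p ∣ m)
    (ζ : F) (hζ : IsPrimitiveRoot ζ m)
    (t : ℤ) (ht : IsCoprime t (m : ℤ)) (ht1 : ((m / p : ℕ) : ℤ) ∣ t - 1)
    (τ : F ≃+* F) (hτ : τ ζ = ζ ^ t)
    (α : F) (hα : α ∈ Algebra.adjoin ℤ ({ζ} : Set F)) :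
    ∃ β ∈ Algebra.adjoin ℤ ({ζ} : Set F), τ α ^ p - α ^ p = (p : F) * β := by
  set A := Algebra.adjoin ℤ ({ζ} : Set F) with hA
  have hζne : ζ ≠ 0 := hζ.ne_zero hm.ne'
  have hζA : ζ ∈ A := Algebra.self_mem_adjoin_singleton ℤ ζ
  -- ζ^t ∈ A
  have hzpow : ∀ s : ℤ, ζ ^ s ∈ A := by
    intro s
    have h1 : ζ ^ s = ζ ^ ((s % m).toNat) := by
      have hmod : s % (m : ℤ) = ((s % m).toNat : ℤ) :=
        (Int.toNat_of_nonneg (Int.emod_nonneg s (by exact_mod_cast hm.ne'))).symm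
      calc ζ ^ s = ζ ^ ((m : ℤ) * (s / m) + s % m) := by rw [Int.mul_ediv_add_emod]
        _ = (ζ ^ (m : ℤ)) ^ (s / m) * ζ ^ (s % m) := by rw [zpow_add₀ hζne, zpow_mul]
        _ = ζ ^ (s % m) := by
            rw [show (ζ : F) ^ (m : ℤ) = 1 by exact_mod_cast hζ.pow_eq_one, one_zpow, one_mul]
        _ = ζ ^ ((s % m).toNat) := by rw [← zpow_natCast, ← hmod]
    rw [h1]
    exact pow_mem hζA _
  -- τ maps A into A
  have hτA : ∀ x ∈ A, τ x ∈ A := by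
    intro x hx
    induction hx using Algebra.adjoin_induction with
    | mem y hy =>
        rcases hy with rfl
        rw [hτ]; exact hzpow t
    | algebraMap r =>
        have : τ (algebraMap ℤ F r) = algebraMap ℤ F r := by
          simp [algebraMap_int_eq]
        rw [this]; exact Subalgebra.algebraMap_mem A r
    | add a b ha hb iha ihb => rw [map_add]; exact add_mem iha ihb
    | mul a b ha hb iha ihb => rw [map_mul]; exact mul_mem iha ihb
  -- key: ζ^(t*p) = ζ^p
  have hkey : (ζ ^ t) ^ p = ζ ^ p := by
    obtain ⟨k, hk⟩ := ht1
    have hmp : (m : ℤ) = ((m / p : ℕ) : ℤ) * p := by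
      exact_mod_cast (Nat.div_mul_cancel hpm).symm
    have htp : t * p = p + m * k := by
      linear_combination (p : ℤ) * hk - k * hmp
    have h2 : (ζ ^ t) ^ (p : ℤ) = ζ ^ (p : ℤ) := calc
      (ζ ^ t) ^ (p : ℤ) = ζ ^ (t * p) := by rw [← zpow_mul]
      _ = ζ ^ ((p : ℤ) + m * k) := by rw [htp]
      _ = ζ ^ (p : ℤ) * ((ζ ^ (m : ℤ)) ^ k) := by rw [zpow_add₀ hζne, zpow_mul]
      _ = ζ ^ (p : ℤ) := by
          rw [show (ζ : F) ^ (m : ℤ) = 1 by exact_mod_cast hζ.pow_eq_one, one_zpow, mul_one]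
    rw [← zpow_natCast (ζ ^ t) p, ← zpow_natCast ζ p]
    exact h2
  -- main induction
  induction hα using Algebra.adjoin_induction with
  | mem y hy =>
      rcases hy with rfl
      exact ⟨0, zero_mem A, by rw [hτ, hkey, sub_self, mul_zero]⟩
  | algebraMap r =>
      refine ⟨0, zero_mem A, ?_⟩
      have : τ (algebraMap ℤ F r) = algebraMap ℤ F r := by simp [algebraMap_int_eq]
      rw [this, sub_self, mul_zero]
  | add a b ha hb iha ihb =>
      obtain ⟨βa, hβa, ea⟩ := iha
      obtain ⟨βb, hβb, eb⟩ := ihb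
      have haA : a ∈ A := ha
      have hbA : b ∈ A := hb
      refine ⟨βa + βb +
        (∑ k ∈ Finset.Ioo 0 p, τ a ^ k * τ b ^ (p - k) * ↑(p.choose k / p)
          - ∑ k ∈ Finset.Ioo 0 p, a ^ k * b ^ (p - k) * ↑(p.choose k / p)), ?_, ?_⟩
      · refine add_mem (add_mem hβa hβb) (sub_mem ?_ ?_) <;>
          refine sum_mem fun i hi => ?_
        · exact mul_mem (mul_mem (pow_mem (hτA a haA) _) (pow_mem (hτA b hbA) _))
            (Subalgebra.natCast_mem A _)
        · exact mul_mem (mul_mem (pow_mem haA _) (pow_mem hbA _)) (Subalgebra.natCast_mem A _)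
      · rw [map_add, add_pow_prime_eq' hp, add_pow_prime_eq' hp]
        rw [mul_add, mul_add, mul_sub, ← ea, ← eb]
        ring
  | mul a b ha hb iha ihb =>
      obtain ⟨βa, hβa, ea⟩ := iha
      obtain ⟨βb, hβb, eb⟩ := ihb
      have haA : a ∈ A := ha
      have hbA : b ∈ A := hb
      refine ⟨τ a ^ p * βb + b ^ p * βa, add_mem
        (mul_mem (pow_mem (hτA a haA) _) hβb) (mul_mem (pow_mem hbA _) hβa), ?_⟩
      have : τ (a * b) ^ p - (a * b) ^ p
          = τ a ^ p * (τ b ^ p - b ^ p) + b ^ p * (τ a ^ p - a ^ p) := by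
        rw [map_mul]; ring
      rw [this, ea, eb]; ring
end

section
/- Let L be a number field with ring of integers 𝒪_L, let c : L → L be a field automorphism of L, let p be a rational prime that is unramified in L (i.e., every prime ideal of 𝒪_L containing p has ramification index 1 over p), and let π ∈ 𝒪_L satisfy π·c(π) = p. Then for every prime ideal 𝔮 of 𝒪_L with p ∈ 𝔮, exactly one of the two elements π and c(π) lies in 𝔮. -/
open NumberField

/-- key step in Theorem 5.2 of Baker–Silverman: Let `L` be a number field,
`c : L → L` a field automorphism, and `p` a rational prime unramified in `L`.  If
`π ∈ 𝒪_L` satisfies `π · c(π) = p`, then for every prime ideal `𝔮` of `𝒪_L` containing `p`,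
exactly one of `π` and `c(π)` lies in `𝔮`. -/
theorem xor_mem_prime_of_mul_conj_eq_p
    {L : Type*} [Field L] [NumberField L] (c : L ≃+* L)
    (p : ℕ) (hp : p.Prime)
    (hunram : ∀ 𝔮 : Ideal (𝓞 L), 𝔮.IsPrime → (p : 𝓞 L) ∈ 𝔮 →
      Ideal.ramificationIdx' (Ideal.span {(p : ℤ)}) 𝔮 = 1)
    (π : 𝓞 L) (hπ : π * RingOfIntegers.mapRingEquiv c π = (p : 𝓞 L)) :
    ∀ 𝔮 : Ideal (𝓞 L), 𝔮.IsPrime → (p : 𝓞 L) ∈ 𝔮 →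
      Xor' (π ∈ 𝔮) (RingOfIntegers.mapRingEquiv c π ∈ 𝔮) := by
  intro 𝔮 h𝔮 hp𝔮
  set π' := RingOfIntegers.mapRingEquiv c π with hπ'
  have hpne : (p : 𝓞 L) ≠ 0 := by
    exact_mod_cast Nat.cast_ne_zero.mpr hp.ne_zero
  -- the map of the ideal (p) to 𝓞 L is span {(p : 𝓞 L)}
  have hmap : Ideal.map (algebraMap ℤ (𝓞 L)) (Ideal.span {(p : ℤ)}) =
      Ideal.span {(p : 𝓞 L)} := by
    rw [Ideal.map_span, Set.image_singleton]
    norm_cast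
  have hmapne : Ideal.map (algebraMap ℤ (𝓞 L)) (Ideal.span {(p : ℤ)}) ≠ ⊥ := by
    rw [hmap, Ne, Ideal.span_singleton_eq_bot]
    exact hpne
  have h𝔮ne : 𝔮 ≠ ⊥ := by
    rintro rfl
    exact hpne hp𝔮
  -- not both π and π' in 𝔮
  have hnotboth : ¬ (π ∈ 𝔮 ∧ π' ∈ 𝔮) := by
    rintro ⟨h1, h2⟩
    have hle : Ideal.map (algebraMap ℤ (𝓞 L)) (Ideal.span {(p : ℤ)}) ≤ 𝔮 ^ 2 := by
      rw [hmap, Ideal.span_singleton_le_iff_mem, ← hπ, sq]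
      exact Ideal.mul_mem_mul h1 h2
    -- the ramification index equals the multiplicity of 𝔮 in the factorization of p𝒪_L
    classical
    have hcount := Ideal.IsDedekindDomain.ramificationIdx'_eq_normalizedFactors_count
      (p := Ideal.span {(p : ℤ)}) (P := 𝔮) hmapne h𝔮 h𝔮ne
    have hirr := (Ideal.prime_of_isPrime h𝔮ne h𝔮).irreducible
    have hdvd : 𝔮 ^ 2 ∣ Ideal.map (algebraMap ℤ (𝓞 L)) (Ideal.span {(p : ℤ)}) :=
      Ideal.dvd_iff_le.mpr hle
    have h2le : 2 ≤ Multiset.count 𝔮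
        (UniqueFactorizationMonoid.normalizedFactors
          (Ideal.map (algebraMap ℤ (𝓞 L)) (Ideal.span {(p : ℤ)}))) := by
      have := (UniqueFactorizationMonoid.dvd_iff_normalizedFactors_le_normalizedFactors
        (pow_ne_zero 2 h𝔮ne) hmapne).mp hdvd
      rwa [UniqueFactorizationMonoid.normalizedFactors_pow,
        UniqueFactorizationMonoid.normalizedFactors_irreducible hirr, normalize_eq,
        Multiset.nsmul_singleton, ← Multiset.le_count_iff_replicate_le] at this
    rw [hunram 𝔮 h𝔮 hp𝔮] at hcount
    omega
  -- at least one of π, π' in 𝔮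
  have hone : π ∈ 𝔮 ∨ π' ∈ 𝔮 := by
    have : π * π' ∈ 𝔮 := by rw [hπ]; exact hp𝔮
    exact h𝔮.mem_or_mem this
  rcases hone with h | h
  · exact Or.inl ⟨h, fun h' => hnotboth ⟨h, h'⟩⟩
  · exact Or.inr ⟨h, fun h' => hnotboth ⟨h', h⟩⟩
end
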